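/- The linear system Mx = b over the ring ℤ/p^kℤ has a solution if and only if the matrices M and the augmented matrix (M, b) have the same invariant factors (equivalently, the same Smith normal form). -/

import Mathlib

/-- The `m × n` matrix with diagonal entries `d 0, …, d (r-1)` in the top-left
corner and zeros elsewhere (a Smith-normal-form shaped matrix). -/
def snfMat {R : Type*} [Zero R] (m n r : ℕ) (d : Fin r → R) :
    Matrix (Fin m) (Fin n) R :=
  Matrix.of fun i j => if h : (i : ℕ) = (j : ℕ) ∧ (i : ℕ) < r then d ⟨i, h.2⟩ else 0

/-- `M` is equivalent (via invertible matrices) to the SNF-shaped matrix with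
diagonal entries `d`. -/
def HasSNF {R : Type*} [CommRing R] {m n r : ℕ}
    (M : Matrix (Fin m) (Fin n) R) (d : Fin r → R) : Prop :=
  ∃ (U : Matrix (Fin m) (Fin m) R) (V : Matrix (Fin n) (Fin n) R),
    IsUnit U.det ∧ IsUnit V.det ∧ U * M * V = snfMat m n r d

section Aux
open Matrix

variable {R : Type*} [CommRing R]

/-- `[[1,0],[0,U]]`. -/
def ext1 {m m' : ℕ} (U : Matrix (Fin m) (Fin m') R) : Matrix (Fin (m+1)) (Fin (m'+1)) R :=
  Matrix.of fun i j =>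
    Fin.cases (Fin.cases 1 (fun _ => 0) j) (fun i' => Fin.cases 0 (fun j' => U i' j') j) i

@[simp] lemma ext1_zero_zero {m m'} (U : Matrix (Fin m) (Fin m') R) : ext1 U 0 0 = 1 := by
  simp [ext1]

@[simp] lemma ext1_zero_succ {m m'} (U : Matrix (Fin m) (Fin m') R) (j) :
    ext1 U 0 (Fin.succ j) = 0 := by simp [ext1]

@[simp] lemma ext1_succ_zero {m m'} (U : Matrix (Fin m) (Fin m') R) (i) :
    ext1 U (Fin.succ i) 0 = 0 := by simp [ext1]

@[simp] lemma ext1_succ_succ {m m'} (U : Matrix (Fin m) (Fin m') R) (i j) :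
    ext1 U (Fin.succ i) (Fin.succ j) = U i j := by simp [ext1]

lemma det_ext1 {m : ℕ} (U : Matrix (Fin m) (Fin m) R) : (ext1 U).det = U.det := by
  rw [Matrix.det_succ_column_zero, Fin.sum_univ_succ]
  simp only [ext1_zero_zero, ext1_succ_zero, Fin.val_zero, pow_zero, one_mul, mul_zero,
    zero_mul, Finset.sum_const_zero, add_zero, Fin.succAbove_zero]
  have : (ext1 U).submatrix Fin.succ Fin.succ = U := by
    ext i j; simp [Matrix.submatrix_apply]
  rw [this]


lemma ext1_mul {m n : ℕ} (U : Matrix (Fin m) (Fin m) R) (N : Matrix (Fin (m+1)) (Fin (n+1)) R) :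
    ext1 U * N = Matrix.of (fun i j =>
      Fin.cases (N 0 j) (fun i' => ∑ t, U i' t * N (Fin.succ t) j) i) := by
  ext i j
  refine Fin.cases ?_ (fun i' => ?_) i <;>
    simp [Matrix.mul_apply, Fin.sum_univ_succ]

lemma mul_ext1 {m n : ℕ} (N : Matrix (Fin (m+1)) (Fin (n+1)) R) (V : Matrix (Fin n) (Fin n) R) :
    N * ext1 V = Matrix.of (fun i j =>
      Fin.cases (N i 0) (fun j' => ∑ t, N i (Fin.succ t) * V t j') j) := by
  ext i j
  refine Fin.cases ?_ (fun j' => ?_) j <;>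
    simp [Matrix.mul_apply, Fin.sum_univ_succ]

/-- `[[1,0],[c,I]]`. -/
def addCol {m : ℕ} (c : Fin m → R) : Matrix (Fin (m+1)) (Fin (m+1)) R :=
  Matrix.of fun i j =>
    Fin.cases (Fin.cases 1 (fun _ => 0) j)
      (fun i' => Fin.cases (c i') (fun j' => if i' = j' then 1 else 0) j) i

/-- `[[1,e],[0,I]]`. -/
def addRow {n : ℕ} (e : Fin n → R) : Matrix (Fin (n+1)) (Fin (n+1)) R :=
  Matrix.of fun i j =>
    Fin.cases (Fin.cases 1 (fun j' => e j') j)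
      (fun i' => Fin.cases 0 (fun j' => if i' = j' then 1 else 0) j) i

lemma addCol_mul {m n : ℕ} (c : Fin m → R) (N : Matrix (Fin (m+1)) (Fin (n+1)) R) :
    addCol c * N = Matrix.of (fun i j =>
      Fin.cases (N 0 j) (fun i' => c i' * N 0 j + N (Fin.succ i') j) i) := by
  ext i j
  refine Fin.cases ?_ (fun i' => ?_) i <;>
    simp [Matrix.mul_apply, addCol, Fin.sum_univ_succ, ite_mul, Finset.sum_ite_eq]

lemma mul_addRow {m n : ℕ} (N : Matrix (Fin (m+1)) (Fin (n+1)) R) (e : Fin n → R) :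
    N * addRow e = Matrix.of (fun i j =>
      Fin.cases (N i 0) (fun j' => N i 0 * e j' + N i (Fin.succ j')) j) := by
  ext i j
  refine Fin.cases ?_ (fun j' => ?_) j <;>
    simp [Matrix.mul_apply, addRow, Fin.sum_univ_succ, mul_ite, Finset.sum_ite_eq']

lemma det_addCol {m : ℕ} (c : Fin m → R) : (addCol c).det = 1 := by
  rw [Matrix.det_succ_row_zero, Fin.sum_univ_succ]
  have h0 : ∀ j : Fin m, addCol c 0 (Fin.succ j) = 0 := fun j => by simp [addCol]
  have h00 : addCol c 0 0 = 1 := by simp [addCol]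
  simp only [h0, h00, Fin.val_zero, pow_zero, one_mul, mul_zero, zero_mul,
    Finset.sum_const_zero, add_zero, Fin.succAbove_zero, mul_one]
  have : (addCol c).submatrix Fin.succ Fin.succ = (1 : Matrix (Fin m) (Fin m) R) := by
    ext i j; simp [Matrix.submatrix_apply, addCol, Matrix.one_apply]
  rw [this, Matrix.det_one]

lemma det_addRow {n : ℕ} (e : Fin n → R) : (addRow e).det = 1 := by
  rw [Matrix.det_succ_column_zero, Fin.sum_univ_succ]
  have h0 : ∀ i : Fin n, addRow e (Fin.succ i) 0 = 0 := fun i => by simp [addRow]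
  have h00 : addRow e 0 0 = 1 := by simp [addRow]
  simp only [h0, h00, Fin.val_zero, pow_zero, one_mul, mul_zero, zero_mul,
    Finset.sum_const_zero, add_zero, Fin.succAbove_zero, mul_one]
  have : (addRow e).submatrix Fin.succ Fin.succ = (1 : Matrix (Fin n) (Fin n) R) := by
    ext i j; simp [Matrix.submatrix_apply, addRow, Matrix.one_apply]
  rw [this, Matrix.det_one]

lemma HasSNF.of_mul {m n r : ℕ} {M : Matrix (Fin m) (Fin n) R} {d : Fin r → R}
    {U0 : Matrix (Fin m) (Fin m) R} {V0 : Matrix (Fin n) (Fin n) R}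
    (h : HasSNF (U0 * M * V0) d) (hU0 : IsUnit U0.det) (hV0 : IsUnit V0.det) :
    HasSNF M d := by
  obtain ⟨U, V, hU, hV, hUV⟩ := h
  refine ⟨U * U0, V0 * V, by rw [Matrix.det_mul]; exact hU.mul hU0,
    by rw [Matrix.det_mul]; exact hV0.mul hV, ?_⟩
  calc (U * U0) * M * (V0 * V) = U * (U0 * M * V0) * V := by
        simp only [Matrix.mul_assoc]
    _ = _ := hUV

lemma HasSNF.of_submatrix {m n r : ℕ} {M : Matrix (Fin m) (Fin n) R} {d : Fin r → R}
    (e : Fin m ≃ Fin m) (f : Fin n ≃ Fin n)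
    (h : HasSNF (M.submatrix e f) d) : HasSNF M d := by
  set P : Matrix (Fin m) (Fin m) R := (1 : Matrix (Fin m) (Fin m) R).submatrix ⇑e id with hP
  set Q : Matrix (Fin n) (Fin n) R := (1 : Matrix (Fin n) (Fin n) R).submatrix ⇑f.symm id with hQ
  have hPM : ∀ (n' : ℕ) (N : Matrix (Fin m) (Fin n') R), P * N = N.submatrix ⇑e id := by
    intro n' N
    have := Matrix.one_submatrix_mul (α := R) (e₁ := ⇑e) (e₂ := Equiv.refl (Fin m)) N
    simpa using this
  have hNQ : ∀ (m' : ℕ) (N : Matrix (Fin m') (Fin n) R), N * Q = N.submatrix id ⇑f := by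
    intro m' N
    have := Matrix.mul_submatrix_one (α := R) (e₁ := f.symm) (e₂ := (id : Fin n → Fin n)) N
    simpa using this
  have key : P * M * Q = M.submatrix ⇑e ⇑f := by
    rw [hPM, hNQ m, Matrix.submatrix_submatrix]
    simp
  have hPunit : IsUnit P.det := by
    have h1 : P * ((1 : Matrix (Fin m) (Fin m) R).submatrix ⇑e.symm id) = 1 := by
      rw [hPM, Matrix.submatrix_submatrix]
      simp
    exact IsUnit.of_mul_eq_one _ (by rw [← Matrix.det_mul, h1, Matrix.det_one])
  have hQunit : IsUnit Q.det := by
    have h1 : ((1 : Matrix (Fin n) (Fin n) R).submatrix ⇑f id) * Q = 1 := by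
      rw [hNQ n, Matrix.submatrix_submatrix]
      ext i j
      simp [Matrix.submatrix_apply, Matrix.one_apply, Equiv.apply_eq_iff_eq]
    exact IsUnit.of_mul_eq_one (a := Q.det) _
      (by rw [mul_comm, ← Matrix.det_mul, h1, Matrix.det_one])
  rw [← key] at h
  exact h.of_mul hPunit hQunit


@[simp] lemma snfMat_zero_r {m n : ℕ} (d : Fin 0 → R) : snfMat m n 0 d = 0 := by
  ext i j
  simp [snfMat]

@[simp] lemma snfMat_zero_zero' {m n r : ℕ} (d : Fin (r+1) → R) :
    snfMat (m+1) (n+1) (r+1) d 0 0 = d 0 := by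
  simp [snfMat]

@[simp] lemma snfMat_zero_succ' {m n r : ℕ} (d : Fin r → R) (j : Fin n) :
    snfMat (m+1) (n+1) r d 0 (Fin.succ j) = 0 := by
  rw [snfMat, Matrix.of_apply, dif_neg]
  simp [Fin.val_succ]

@[simp] lemma snfMat_succ_zero' {m n r : ℕ} (d : Fin r → R) (i : Fin m) :
    snfMat (m+1) (n+1) r (d) (Fin.succ i) 0 = 0 := by
  rw [snfMat, Matrix.of_apply, dif_neg]
  simp [Fin.val_succ]

lemma snfMat_succ_succ {m n r : ℕ} (a : R) (d' : Fin r → R) (i : Fin m) (j : Fin n) :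
    snfMat (m+1) (n+1) (r+1) (Fin.cons a d') (Fin.succ i) (Fin.succ j) = snfMat m n r d' i j := by
  simp only [snfMat, Matrix.of_apply, Fin.val_succ]
  by_cases h : (i : ℕ) = (j : ℕ) ∧ (i : ℕ) < r
  · obtain ⟨h1, h2⟩ := h
    rw [dif_pos ⟨by omega, by omega⟩, dif_pos ⟨h1, h2⟩]
    have : (⟨(i : ℕ) + 1, by omega⟩ : Fin (r+1)) = Fin.succ ⟨i, h2⟩ := rfl
    rw [this, Fin.cons_succ]
  · rw [dif_neg (by omega), dif_neg h]

lemma hasSNF_of_zero_dim {m n : ℕ} (M : Matrix (Fin m) (Fin n) R) (h : m = 0 ∨ n = 0) :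
    HasSNF M (Fin.elim0 : Fin 0 → R) := by
  refine ⟨1, 1, by rw [Matrix.det_one]; exact isUnit_one,
    by rw [Matrix.det_one]; exact isUnit_one, ?_⟩
  rw [Matrix.one_mul, Matrix.mul_one, snfMat_zero_r]
  ext i j
  rcases h with h | h
  · subst h; exact i.elim0
  · subst h; exact j.elim0

lemma hasSNF_zero_matrix {m n : ℕ} : HasSNF (0 : Matrix (Fin m) (Fin n) R) (Fin.elim0 : Fin 0 → R) := by
  refine ⟨1, 1, by rw [Matrix.det_one]; exact isUnit_one,
    by rw [Matrix.det_one]; exact isUnit_one, ?_⟩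
  rw [Matrix.one_mul, Matrix.mul_one, snfMat_zero_r]

lemma hasSNF_cons {m n r : ℕ} {M2 : Matrix (Fin (m+1)) (Fin (n+1)) R} {a : R} {d' : Fin r → R}
    (h00 : M2 0 0 = a) (h0j : ∀ j, M2 0 (Fin.succ j) = 0) (hi0 : ∀ i, M2 (Fin.succ i) 0 = 0)
    (hB : HasSNF (Matrix.of fun i j => M2 (Fin.succ i) (Fin.succ j)) d') :
    HasSNF M2 (Fin.cons a d') := by
  obtain ⟨U', V', hU', hV', h⟩ := hB
  refine ⟨ext1 U', ext1 V', by rw [det_ext1]; exact hU', by rw [det_ext1]; exact hV', ?_⟩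
  rw [ext1_mul, mul_ext1]
  ext i j
  refine Fin.cases ?_ (fun i' => ?_) i <;> refine Fin.cases ?_ (fun j' => ?_) j
  · simp [h00]
  · simp [h0j]
  · simp [hi0]
  · have : ∑ t, (∑ s, U' i' s * M2 (Fin.succ s) (Fin.succ t)) * V' t j'
        = (U' * (Matrix.of fun i j => M2 (Fin.succ i) (Fin.succ j)) * V') i' j' := by
      simp [Matrix.mul_apply]
    simp only [Matrix.of_apply, Fin.cases_succ]
    rw [this, h, snfMat_succ_succ]

end Aux

section ZModPart

variable {p k : ℕ}

lemma zmod_pow_k_eq_zero : ((p : ZMod (p^k)))^k = 0 := by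
  have : ((p : ZMod (p^k)))^k = ((p^k : ℕ) : ZMod (p^k)) := by push_cast; ring
  rw [this, ZMod.natCast_self]

lemma zmod_decomp (hp : p.Prime) (x : ZMod (p^k)) :
    ∃ (u : (ZMod (p^k))ˣ) (v : ℕ), v ≤ k ∧ x = u * (p : ZMod (p^k))^v ∧ (x = 0 → v = k) := by
  haveI : NeZero (p^k) := ⟨pow_ne_zero k hp.pos.ne'⟩
  by_cases hx : x = 0
  · exact ⟨1, k, le_rfl,
      by rw [hx, Units.val_one, one_mul, zmod_pow_k_eq_zero], fun _ => rfl⟩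
  · have hval : x.val ≠ 0 := by
      intro h; apply hx; rw [← ZMod.natCast_zmod_val x, h, Nat.cast_zero]
    obtain ⟨v, t, hpt, ht⟩ := Nat.exists_eq_pow_mul_and_not_dvd hval p hp.ne_one
    have htu : IsUnit ((t : ℕ) : ZMod (p^k)) := by
      rw [ZMod.isUnit_iff_coprime]
      exact (((Nat.Prime.coprime_iff_not_dvd hp).mpr hpt).symm).pow_right k
    obtain ⟨u, hu⟩ := htu
    refine ⟨u, v, ?_, ?_, fun h => absurd h hx⟩
    · by_contra hvk
      push_neg at hvk
      have h1 : p^v ≤ x.val := Nat.le_of_dvd (Nat.pos_of_ne_zero hval) ⟨t, ht⟩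
      have h2 : x.val < p^k := x.val_lt
      have h3 : p^k ≤ p^v := Nat.pow_le_pow_right hp.pos hvk.le
      omega
    · rw [← ZMod.natCast_zmod_val x, ht]
      push_cast
      rw [hu]
      ring

lemma zmod_dvd_of {x y : ZMod (p^k)} {u w : (ZMod (p^k))ˣ} {va vb : ℕ}
    (hx : x = u * (p : ZMod (p^k))^va) (hy : y = w * (p : ZMod (p^k))^vb) (hab : va ≤ vb) :
    x ∣ y := by
  rw [hx, hy]
  have h1 : ((p : ZMod (p^k))^va : ZMod (p^k)) ∣ (p : ZMod (p^k))^vb := pow_dvd_pow _ hab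
  rw [mul_comm (u : ZMod (p^k)) _]
  exact Units.mul_right_dvd.mpr (h1.mul_left _)

lemma exists_snf (hp : p.Prime) :
    ∀ (m n : ℕ) (M : Matrix (Fin m) (Fin n) (ZMod (p^k))),
    ∃ (r : ℕ) (d : Fin r → ZMod (p^k)), r ≤ min m n ∧ (∀ i, d i ≠ 0) ∧
      (∀ i j : Fin r, i ≤ j → d i ∣ d j) ∧ HasSNF M d := by
  intro m
  induction m with
  | zero =>
    intro n M
    exact ⟨0, Fin.elim0, by omega, fun i => i.elim0, fun i => i.elim0,
      hasSNF_of_zero_dim M (Or.inl rfl)⟩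
  | succ m ih =>
    intro n M
    rcases n with _ | n
    · exact ⟨0, Fin.elim0, by omega, fun i => i.elim0, fun i => i.elim0,
        hasSNF_of_zero_dim M (Or.inr rfl)⟩
    by_cases hM : M = 0
    · exact ⟨0, Fin.elim0, by omega, fun i => i.elim0, fun i => i.elim0,
        hM ▸ hasSNF_zero_matrix⟩
    -- pivot selection
    choose u v hvk hdecomp hzero using
      fun (q : Fin (m+1) × Fin (n+1)) => zmod_decomp hp (M q.1 q.2)
    obtain ⟨q0, -, hq0⟩ := Finset.exists_min_image Finset.univ v Finset.univ_nonempty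
    have hdvd : ∀ i j, M q0.1 q0.2 ∣ M i j := fun i j =>
      zmod_dvd_of (hdecomp q0) (hdecomp (i, j)) (hq0 (i, j) (Finset.mem_univ _))
    have ha0 : M q0.1 q0.2 ≠ 0 := by
      intro h
      apply hM
      ext i j
      have hvq0 : v q0 = k := hzero _ h
      have hvij : v (i, j) = k := le_antisymm (hvk _) (hvq0 ▸ hq0 (i, j) (Finset.mem_univ _))
      have : M i j = (u (i, j) : ZMod (p^k)) * (p : ZMod (p^k))^(v (i, j)) := hdecomp (i, j)
      rw [hvij, zmod_pow_k_eq_zero, mul_zero] at this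
      simpa using this
    set e := Equiv.swap (0 : Fin (m+1)) q0.1 with he
    set f := Equiv.swap (0 : Fin (n+1)) q0.2 with hf
    set M1 := M.submatrix ⇑e ⇑f with hM1
    have h00 : M1 0 0 = M q0.1 q0.2 := by
      simp [hM1, he, hf, Equiv.swap_apply_left]
    have hM1dvd : ∀ i j, M1 0 0 ∣ M1 i j := by
      intro i j
      rw [h00]
      exact hdvd _ _
    have ha0' : M1 0 0 ≠ 0 := h00 ▸ ha0
    set a := M1 0 0 with ha
    choose c hc using fun i' : Fin m => hM1dvd (Fin.succ i') 0
    choose g hg using fun j' : Fin n => hM1dvd 0 (Fin.succ j')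
    set W := addCol (fun i' => -(c i')) * M1 with hWdef
    have hW : W = Matrix.of (fun i j =>
        Fin.cases (M1 0 j) (fun i' => -(c i') * M1 0 j + M1 (Fin.succ i') j) i) := by
      rw [hWdef, addCol_mul]
    set M2 := W * addRow (fun j' => -(g j')) with hM2def
    have hM2 : M2 = Matrix.of (fun i j =>
        Fin.cases (W i 0) (fun j' => W i 0 * (-(g j')) + W i (Fin.succ j')) j) := by
      rw [hM2def, mul_addRow]
    have hW0 : ∀ j, W 0 j = M1 0 j := fun j => by rw [hW]; simp
    have hWs : ∀ i' j, W (Fin.succ i') j = -(c i') * M1 0 j + M1 (Fin.succ i') j :=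
      fun i' j => by rw [hW]; simp
    have e00 : M2 0 0 = a := by rw [hM2]; simp [hW0, ha]
    have e0j : ∀ j', M2 0 (Fin.succ j') = 0 := by
      intro j'
      rw [hM2]
      simp only [Matrix.of_apply, Fin.cases_succ, hW0]
      rw [hg j']
      ring
    have ei0 : ∀ i', M2 (Fin.succ i') 0 = 0 := by
      intro i'
      rw [hM2]
      simp only [Matrix.of_apply, Fin.cases_zero, hWs]
      rw [hc i']
      ring
    have eij : ∀ i' j', M2 (Fin.succ i') (Fin.succ j')
        = -(c i') * M1 0 (Fin.succ j') + M1 (Fin.succ i') (Fin.succ j') := by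
      intro i' j'
      rw [hM2]
      simp only [Matrix.of_apply, Fin.cases_succ, hWs]
      rw [hc i']
      ring
    have hdvdB : ∀ i' j', a ∣ M2 (Fin.succ i') (Fin.succ j') := by
      intro i' j'
      rw [eij]
      exact dvd_add ((hM1dvd 0 _).mul_left _) (hM1dvd _ _)
    set B := Matrix.of (fun i' j' => M2 (Fin.succ i') (Fin.succ j')) with hB
    obtain ⟨r', d', hr', hd0', hchain', hBsnf⟩ := ih n B
    have hadvd : ∀ i : Fin r', a ∣ d' i := by
      intro i
      obtain ⟨U', V', hU', hV', hUV'⟩ := hBsnf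
      have hin : (i : ℕ) < m := lt_of_lt_of_le i.isLt (hr'.trans (min_le_left _ _))
      have hjn : (i : ℕ) < n := lt_of_lt_of_le i.isLt (hr'.trans (min_le_right _ _))
      have hdd : d' i = (U' * B * V') ⟨i, hin⟩ ⟨i, hjn⟩ := by
        rw [hUV']
        simp [snfMat]
      rw [hdd]
      simp only [Matrix.mul_apply]
      refine Finset.dvd_sum fun s _ => ?_
      refine Dvd.dvd.mul_right ?_ _
      refine Finset.dvd_sum fun t _ => ?_
      exact ((hdvdB t s).mul_left _)
    refine ⟨r' + 1, Fin.cons a d', by omega, ?_, ?_, ?_⟩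
    · intro i
      refine Fin.cases ?_ (fun i' => ?_) i
      · rw [Fin.cons_zero]; exact ha0'
      · rw [Fin.cons_succ]; exact hd0' i'
    · intro i j hij
      revert hij
      refine Fin.cases ?_ (fun i' => ?_) i
      · intro _
        rw [Fin.cons_zero]
        refine Fin.cases ?_ (fun j' => ?_) j
        · rw [Fin.cons_zero]
        · rw [Fin.cons_succ]; exact hadvd j'
      · refine Fin.cases ?_ (fun j' => ?_) j
        · intro hij
          exact absurd (Fin.le_zero_iff.mp hij) (Fin.succ_ne_zero i')
        · intro hij
          rw [Fin.cons_succ, Fin.cons_succ]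
          exact hchain' i' j' (by rwa [Fin.succ_le_succ_iff] at hij)
    · have h2 : HasSNF M2 (Fin.cons a d') := hasSNF_cons e00 e0j ei0 hBsnf
      have h1 : HasSNF M1 (Fin.cons a d') := by
        refine HasSNF.of_mul (U0 := addCol (fun i' => -(c i'))) (V0 := addRow (fun j' => -(g j'))) ?_
          (by rw [det_addCol]; exact isUnit_one) (by rw [det_addRow]; exact isUnit_one)
        exact h2
      exact HasSNF.of_submatrix e f h1

end ZModPart

section Ranges

variable {R : Type*} [CommRing R]

lemma snf_mulVec {m n r : ℕ} (hr : r ≤ n) (d : Fin r → R) (x : Fin n → R) (i : Fin m) :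
    (snfMat m n r d).mulVec x i
      = if h : (i : ℕ) < r then d ⟨i, h⟩ * x ⟨i, h.trans_le hr⟩ else 0 := by
  rw [Matrix.mulVec, dotProduct]
  by_cases h : (i : ℕ) < r
  · rw [dif_pos h, Finset.sum_eq_single (⟨(i : ℕ), h.trans_le hr⟩ : Fin n)]
    · rw [snfMat, Matrix.of_apply, dif_pos ⟨rfl, h⟩]
    · intro j _ hj
      rw [snfMat, Matrix.of_apply, dif_neg, zero_mul]
      rintro ⟨h1, -⟩
      exact hj (Fin.ext h1.symm)
    · intro h'
      exact absurd (Finset.mem_univ _) h'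
  · rw [dif_neg h]
    refine Finset.sum_eq_zero fun j _ => ?_
    rw [snfMat, Matrix.of_apply, dif_neg, zero_mul]
    rintro ⟨-, h2⟩
    exact h h2

lemma range_snf_mulVec {m n r : ℕ} (hr : r ≤ n) (d : Fin r → R) :
    Set.range (snfMat m n r d).mulVec
      = {y : Fin m → R | ∀ i : Fin m, if h : (i : ℕ) < r then d ⟨i, h⟩ ∣ y i else y i = 0} := by
  ext y
  constructor
  · rintro ⟨x, rfl⟩
    intro i
    by_cases h : (i : ℕ) < r
    · rw [dif_pos h, snf_mulVec hr]
      rw [dif_pos h]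
      exact Dvd.intro _ rfl
    · rw [dif_neg h, snf_mulVec hr, dif_neg h]
  · intro hy
    have hex : ∀ i : Fin m, ∃ cc : R, ∀ h : (i : ℕ) < r, y i = d ⟨i, h⟩ * cc := by
      intro i
      by_cases h : (i : ℕ) < r
      · have := hy i
        rw [dif_pos h] at this
        obtain ⟨cc, hcc⟩ := this
        exact ⟨cc, fun _ => hcc⟩
      · exact ⟨0, fun h' => absurd h' h⟩
    choose q hq using hex
    refine ⟨fun j => if h : (j : ℕ) < m then q ⟨j, h⟩ else 0, ?_⟩
    funext i
    rw [snf_mulVec hr]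
    by_cases h : (i : ℕ) < r
    · rw [dif_pos h]
      have him : ((⟨(i : ℕ), h.trans_le hr⟩ : Fin n) : ℕ) < m := i.isLt
      rw [dif_pos him]
      have : (⟨((⟨(i : ℕ), h.trans_le hr⟩ : Fin n) : ℕ), him⟩ : Fin m) = i := Fin.ext rfl
      rw [this, ← hq i h]
    · rw [dif_neg h]
      have := hy i
      rw [dif_neg h] at this
      exact this.symm

lemma range_eq_image {m n : ℕ} (U : Matrix (Fin m) (Fin m) R) (V : Matrix (Fin n) (Fin n) R)
    (M : Matrix (Fin m) (Fin n) R) (hV : IsUnit V.det) :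
    Set.range ((U * M * V).mulVec) = U.mulVec '' Set.range M.mulVec := by
  have hVs : Function.Surjective V.mulVec :=
    Matrix.mulVec_surjective_iff_isUnit.mpr ((Matrix.isUnit_iff_isUnit_det V).mpr hV)
  have key : ∀ x, (U * M * V).mulVec x = U.mulVec (M.mulVec (V.mulVec x)) := by
    intro x
    rw [Matrix.mulVec_mulVec, Matrix.mulVec_mulVec]
  ext y
  constructor
  · rintro ⟨x, rfl⟩
    exact ⟨M.mulVec (V.mulVec x), ⟨_, rfl⟩, (key x).symm⟩
  · rintro ⟨z, ⟨x, rfl⟩, rfl⟩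
    obtain ⟨x', rfl⟩ := hVs x
    exact ⟨x', key x'⟩

lemma mulVec_injective_of_isUnit {m : ℕ} {U : Matrix (Fin m) (Fin m) R} (hU : IsUnit U.det) :
    Function.Injective U.mulVec := by
  intro x y h
  have h2 := congrArg (Matrix.mulVec U⁻¹) h
  rwa [Matrix.mulVec_mulVec, Matrix.mulVec_mulVec, Matrix.nonsing_inv_mul U hU,
    Matrix.one_mulVec, Matrix.one_mulVec] at h2

/-- `[[V,0],[0,1]]` with last-index block structure. -/
def extLast {n : ℕ} (V : Matrix (Fin n) (Fin n) R) : Matrix (Fin (n+1)) (Fin (n+1)) R :=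
  Matrix.of fun s t =>
    Fin.lastCases (Fin.lastCases 1 (fun _ => 0) s)
      (fun t' => Fin.lastCases 0 (fun s' => V s' t') s) t

@[simp] lemma extLast_cast_cast {n : ℕ} (V : Matrix (Fin n) (Fin n) R) (s t : Fin n) :
    extLast V (Fin.castSucc s) (Fin.castSucc t) = V s t := by
  simp [extLast]

@[simp] lemma extLast_last_last {n : ℕ} (V : Matrix (Fin n) (Fin n) R) :
    extLast V (Fin.last n) (Fin.last n) = 1 := by
  simp [extLast]

@[simp] lemma extLast_cast_last {n : ℕ} (V : Matrix (Fin n) (Fin n) R) (s : Fin n) :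
    extLast V (Fin.castSucc s) (Fin.last n) = 0 := by
  simp [extLast]

@[simp] lemma extLast_last_cast {n : ℕ} (V : Matrix (Fin n) (Fin n) R) (t : Fin n) :
    extLast V (Fin.last n) (Fin.castSucc t) = 0 := by
  simp [extLast]

lemma det_extLast {n : ℕ} (V : Matrix (Fin n) (Fin n) R) : (extLast V).det = V.det := by
  rw [Matrix.det_succ_column (extLast V) (Fin.last n), Fin.sum_univ_castSucc]
  simp only [extLast_cast_last, mul_zero, zero_mul, Finset.sum_const_zero, zero_add,
    extLast_last_last, mul_one]
  have h1 : ((-1 : R)) ^ ((Fin.last n : ℕ) + (Fin.last n : ℕ)) = 1 :=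
    Even.neg_one_pow ⟨(Fin.last n : ℕ), rfl⟩
  rw [h1, one_mul]
  have : (extLast V).submatrix (Fin.last n).succAbove (Fin.last n).succAbove = V := by
    ext i j
    rw [Fin.succAbove_last]
    simp [Matrix.submatrix_apply]
  rw [this]

end Ranges

/-- The linear system `M x = b` over `ℤ/p^kℤ` has a solution iff `M` and the
augmented matrix `(M, b)` have the same invariant factors. -/
theorem linear_system_solvable_iff_same_invariant_factors
    {p k m n : ℕ} (hp : p.Prime) (hk : 1 ≤ k)
    (M : Matrix (Fin m) (Fin n) (ZMod (p ^ k))) (b : Fin m → ZMod (p ^ k)) :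
    (∃ x : Fin n → ZMod (p ^ k), M.mulVec x = b) ↔
      ∃ (r : ℕ) (d : Fin r → ZMod (p ^ k)),
        r ≤ min m n ∧ (∀ i, d i ≠ 0) ∧ (∀ i j : Fin r, i ≤ j → d i ∣ d j) ∧
        HasSNF M d ∧
        HasSNF (Matrix.of fun i (j : Fin (n + 1)) =>
          Fin.lastCases (b i) (fun j' => M i j') j) d := by
  haveI : NeZero (p ^ k) := ⟨pow_ne_zero k hp.pos.ne'⟩
  set A : Matrix (Fin m) (Fin (n+1)) (ZMod (p ^ k)) :=
    Matrix.of (fun i (j : Fin (n + 1)) => Fin.lastCases (b i) (fun j' => M i j') j) with hA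
  have hAcast : ∀ i j', A i (Fin.castSucc j') = M i j' := by
    intro i j'; simp [hA]
  have hAlast : ∀ i, A i (Fin.last n) = b i := by
    intro i; simp [hA]
  constructor
  · rintro ⟨x, hx⟩
    obtain ⟨r, d, hr, hd0, hchain, hsnf⟩ := exists_snf hp m n M
    obtain ⟨U, V, hU, hV, hUV⟩ := hsnf
    have hrn : r ≤ n := hr.trans (min_le_right _ _)
    refine ⟨r, d, hr, hd0, hchain, ⟨U, V, hU, hV, hUV⟩, ?_⟩
    -- column operation matrix kill the last column
    set C : Matrix (Fin (n+1)) (Fin (n+1)) (ZMod (p ^ k)) := Matrix.of fun s t =>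
      if t = Fin.last n then (Fin.lastCases 1 (fun s' => -(x s')) s : ZMod (p ^ k))
      else (if s = t then 1 else 0) with hC
    have hClast : ∀ s, C s (Fin.last n) = Fin.lastCases 1 (fun s' => -(x s')) s := by
      intro s; simp [hC]
    have hCcast : ∀ s t', C s (Fin.castSucc t') = if s = Fin.castSucc t' then 1 else 0 := by
      intro s t'
      rw [hC, Matrix.of_apply, if_neg (Fin.castSucc_lt_last t').ne]
    have hdetC : C.det = 1 := by
      rw [Matrix.det_of_upperTriangular (M := C) ?ht]
      case ht =>
        intro i j hij
        have hij' : j < i := hij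
        rw [hC, Matrix.of_apply, if_neg (ne_of_lt (lt_of_lt_of_le hij' (Fin.le_last i))),
          if_neg (ne_of_gt hij')]
      refine Finset.prod_eq_one fun i _ => ?_
      refine Fin.lastCases ?_ (fun i' => ?_) i
      · rw [hClast, Fin.lastCases_last]
      · rw [hCcast, if_pos rfl]
    have hAC : A * C = Matrix.of fun i t =>
        (Fin.lastCases 0 (fun t' => M i t') t : ZMod (p ^ k)) := by
      ext i t
      refine Fin.lastCases ?_ (fun t' => ?_) t
      · rw [Matrix.mul_apply]
        simp only [hClast]
        rw [Fin.sum_univ_castSucc]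
        simp only [Fin.lastCases_castSucc, Fin.lastCases_last, hAcast, hAlast,
          Matrix.of_apply, mul_one, mul_neg]
        rw [← hx]
        have hmv : (M.mulVec x) i = ∑ s', M i s' * x s' := rfl
        rw [hmv, Finset.sum_neg_distrib]
        exact neg_add_cancel _
      · rw [Matrix.mul_apply]
        simp only [hCcast, mul_ite, mul_one, mul_zero]
        rw [Finset.sum_ite_eq' Finset.univ (Fin.castSucc t') (fun s => A i s)]
        simp [hAcast]
    have hZV : (A * C) * extLast V = Matrix.of fun i t =>
        (Fin.lastCases 0 (fun t' => (M * V) i t') t : ZMod (p ^ k)) := by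
      rw [hAC]
      ext i t
      refine Fin.lastCases ?_ (fun t' => ?_) t
      · rw [Matrix.mul_apply, Fin.sum_univ_castSucc]
        simp [Fin.lastCases_castSucc, Fin.lastCases_last]
      · rw [Matrix.mul_apply, Fin.sum_univ_castSucc]
        simp only [Matrix.of_apply, Fin.lastCases_castSucc, Fin.lastCases_last,
          extLast_cast_cast, extLast_last_cast, mul_zero, zero_mul, add_zero]
        rw [Matrix.mul_apply]
    refine ⟨U, C * extLast V, hU, ?_, ?_⟩
    · rw [Matrix.det_mul, hdetC, one_mul, det_extLast]
      exact hV
    · rw [Matrix.mul_assoc U A, ← Matrix.mul_assoc A C, hZV]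
      ext i t
      refine Fin.lastCases ?_ (fun t' => ?_) t
      · rw [Matrix.mul_apply]
        have hz : ∀ j, (Matrix.of fun i t =>
            (Fin.lastCases 0 (fun t' => (M * V) i t') t : ZMod (p ^ k))) j (Fin.last n) = 0 := by
          intro j; simp
        simp only [hz, mul_zero, Finset.sum_const_zero]
        rw [snfMat, Matrix.of_apply, dif_neg]
        rintro ⟨h1, h2⟩
        have : (i : ℕ) < n := lt_of_lt_of_le h2 hrn
        rw [Fin.val_last] at h1
        omega
      · rw [Matrix.mul_apply]
        simp only [Matrix.of_apply, Fin.lastCases_castSucc]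
        have : ∑ j, U i j * (M * V) j t' = (U * (M * V)) i t' := by
          rw [Matrix.mul_apply]
        rw [this, ← Matrix.mul_assoc, hUV]
        simp only [snfMat, Matrix.of_apply, Fin.coe_castSucc]
  · rintro ⟨r, d, hr, hd0, hchain, h1, h2⟩
    obtain ⟨U, V, hU, hV, hUV⟩ := h1
    obtain ⟨U', V', hU', hV', hUV'⟩ := h2
    set S := Set.range M.mulVec with hS
    set S' := Set.range A.mulVec with hS'
    have hbS' : b ∈ S' := by
      refine ⟨Pi.single (Fin.last n) 1, ?_⟩
      funext i
      rw [Matrix.mulVec_single]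
      simp [hAlast]
    have hSS' : S ⊆ S' := by
      rintro y ⟨x, rfl⟩
      refine ⟨Fin.snoc x 0, ?_⟩
      funext i
      rw [Matrix.mulVec, dotProduct, Fin.sum_univ_castSucc]
      simp only [Fin.snoc_castSucc, Fin.snoc_last, mul_zero, add_zero, hAcast, hAlast]
      rw [Matrix.mulVec, dotProduct]
    have hrn : r ≤ n := hr.trans (min_le_right _ _)
    have himg : Matrix.mulVec U '' S = Set.range (snfMat m n r d).mulVec := by
      rw [hS, ← range_eq_image U V M hV, hUV]
    have himg' : Matrix.mulVec U' '' S' = Set.range (snfMat m (n+1) r d).mulVec := by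
      rw [hS', ← range_eq_image U' V' A hV', hUV']
    have hsame : Set.range (snfMat m n r d).mulVec
        = Set.range (snfMat m (n+1) r d).mulVec := by
      rw [range_snf_mulVec hrn d, range_snf_mulVec (hrn.trans (Nat.le_succ n)) d]
    have hcard : S'.ncard = S.ncard := by
      calc S'.ncard = (Matrix.mulVec U' '' S').ncard :=
            (Set.ncard_image_of_injective _ (mulVec_injective_of_isUnit hU')).symm
        _ = (Matrix.mulVec U '' S).ncard := by rw [himg, himg', hsame]
        _ = S.ncard := Set.ncard_image_of_injective _ (mulVec_injective_of_isUnit hU)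
    have hSeq : S = S' := Set.eq_of_subset_of_ncard_le hSS' (le_of_eq hcard) (Set.toFinite S')
    rw [← hSeq] at hbS'
    obtain ⟨x, hx⟩ := hbS'
    exact ⟨x, hx⟩
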